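/- arXiv:2012.05449 — 4 statements merged into one kernel-verified Lean document; each statement's English description precedes it below -/
import Mathlib

section
/- Path-integral representation: for every t ≥ 1, every p ∈ [0,1] with q = 1−p, and all i, j ∈ {1,…,m}, with ρ_0 = |i⟩⟨i| and ρ_t = Φ_t ∘ ⋯ ∘ Φ_1(ρ_0), one has Tr(|j⟩⟨j| ρ_t) = Σ_{n=0}^{t} Σ_{0 < σ_1 < σ_2 < ⋯ < σ_n ≤ t} p^n q^{t−n} Σ_{i_1,…,i_n = 1}^{m} |⟨j| U_t ⋯ U_{σ_n+1} |i_n⟩|² · |⟨i_n| U_{σ_n} ⋯ U_{σ_{n−1}+1} |i_{n−1}⟩|² ⋯ |⟨i_1| U_{σ_1} ⋯ U_1 |i⟩|², where the inner sum over an empty set of measurement times (n = 0) is |⟨j| U_t ⋯ U_1 |i⟩|². -/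
open Matrix BigOperators

/-- Kraus operators: `A 0 = √(1-p)·I`, `A i = √p·|i⟩⟨i|`. -/
noncomputable def krausOp (m : ℕ) (p : ℝ) : Option (Fin m) → Matrix (Fin m) (Fin m) ℂ
  | none => (Real.sqrt (1 - p) : ℂ) • (1 : Matrix (Fin m) (Fin m) ℂ)
  | some i => (Real.sqrt p : ℂ) • Matrix.single i i 1

/-- The decoherent quantum operation `Φ(ρ) = Σ_{i=0}^m A_i U ρ U* A_i*`. -/
noncomputable def decohStep (m : ℕ) (p : ℝ) (U ρ : Matrix (Fin m) (Fin m) ℂ) :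
    Matrix (Fin m) (Fin m) ℂ :=
  ∑ a : Option (Fin m), krausOp m p a * (U * ρ * Uᴴ) * (krausOp m p a)ᴴ

/-- `rhoSeq m p U ρ₀ t = Φ_t ∘ ⋯ ∘ Φ_1 (ρ₀)`. -/
noncomputable def rhoSeq (m : ℕ) (p : ℝ) (U : ℕ → Matrix (Fin m) (Fin m) ℂ)
    (ρ0 : Matrix (Fin m) (Fin m) ℂ) : ℕ → Matrix (Fin m) (Fin m) ℂ
  | 0 => ρ0
  | (t + 1) => decohStep m p (U (t + 1)) (rhoSeq m p U ρ0 t)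

/-- `Uprod U s t = U_t · U_{t-1} ⋯ U_{s+1}` (the identity if `t ≤ s`). -/
noncomputable def Uprod (m : ℕ) (U : ℕ → Matrix (Fin m) (Fin m) ℂ) (s : ℕ) :
    ℕ → Matrix (Fin m) (Fin m) ℂ
  | 0 => 1
  | (t + 1) => if t + 1 ≤ s then 1 else U (t + 1) * Uprod m U s t

lemma Uprod_succ_of_le (m : ℕ) (U : ℕ → Matrix (Fin m) (Fin m) ℂ) {s t : ℕ} (h : s ≤ t) :
    Uprod m U s (t+1) = U (t+1) * Uprod m U s t := by
  simp [Uprod]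
  omega

lemma Uprod_self (m : ℕ) (U : ℕ → Matrix (Fin m) (Fin m) ℂ) (s : ℕ) :
    Uprod m U s s = 1 := by
  cases s with
  | zero => rfl
  | succ t => simp [Uprod]

lemma stdBasis_conj (m : ℕ) (a : Fin m) :
    (Matrix.single a a (1:ℂ))ᴴ = Matrix.single a a 1 := by
  ext b c
  simp [conjTranspose_apply, Matrix.single, and_comm]

lemma stdBasis_mul_mul (m : ℕ) (a : Fin m) (X : Matrix (Fin m) (Fin m) ℂ) :
    Matrix.single a a 1 * X * Matrix.single a a 1
      = X a a • Matrix.single a a 1 := by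
  ext b c
  by_cases hb : b = a <;> by_cases hc : c = a <;>
    simp [Matrix.mul_apply, Matrix.single, ite_and, Finset.sum_ite_eq,
      Finset.sum_ite_eq', hb, hc, mul_comm, eq_comm] <;> split_ifs <;> rfl

lemma sandwich_diag (m : ℕ) (V : Matrix (Fin m) (Fin m) ℂ) (x a : Fin m) :
    ((V * Matrix.single x x 1 * Vᴴ) : Matrix (Fin m) (Fin m) ℂ) a a = ((‖V a x‖ ^ 2 : ℝ) : ℂ) := by
  simp only [Matrix.mul_apply, Matrix.single, conjTranspose_apply, Matrix.of_apply,
    mul_ite, mul_zero, mul_one, ite_mul, zero_mul, ite_and, Finset.sum_ite_eq,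
    Finset.mem_univ, if_true]
  rw [show star (V a x) = (starRingEnd ℂ) (V a x) from rfl, Complex.mul_conj]
  simp [Complex.normSq_eq_norm_sq]

lemma decohStep_eq (m : ℕ) (p : ℝ) (hp0 : 0 ≤ p) (hp1 : p ≤ 1)
    (V ρ : Matrix (Fin m) (Fin m) ℂ) :
    decohStep m p V ρ = ((1 - p : ℝ) : ℂ) • (V * ρ * Vᴴ)
      + ∑ a : Fin m, (((p : ℝ) : ℂ) * ((V * ρ * Vᴴ) a a)) • Matrix.single a a 1 := by
  unfold decohStep
  rw [Fintype.sum_option]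
  congr 1
  · simp only [krausOp, Matrix.smul_mul, Matrix.mul_smul, conjTranspose_smul,
      Matrix.one_mul, Matrix.mul_one, conjTranspose_one, smul_smul]
    rw [Complex.star_def, Complex.conj_ofReal, ← Complex.ofReal_mul,
      Real.mul_self_sqrt (by linarith)]
  · refine Finset.sum_congr rfl fun a _ => ?_
    simp only [krausOp, Matrix.smul_mul, Matrix.mul_smul, conjTranspose_smul, smul_smul,
      stdBasis_conj]
    rw [Complex.star_def, Complex.conj_ofReal, ← Complex.ofReal_mul, Real.mul_self_sqrt hp0,
      stdBasis_mul_mul, smul_smul]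

lemma decohStep_sum (m : ℕ) (p : ℝ) (V : Matrix (Fin m) (Fin m) ℂ) {α : Type*}
    (s : Finset α) (f : α → Matrix (Fin m) (Fin m) ℂ) :
    decohStep m p V (∑ x ∈ s, f x) = ∑ x ∈ s, decohStep m p V (f x) := by
  unfold decohStep
  simp only [Finset.mul_sum, Finset.sum_mul]
  exact Finset.sum_comm

lemma decohStep_smul (m : ℕ) (p : ℝ) (V : Matrix (Fin m) (Fin m) ℂ) (c : ℂ)
    (M : Matrix (Fin m) (Fin m) ℂ) :
    decohStep m p V (c • M) = c • decohStep m p V M := by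
  unfold decohStep
  simp [Matrix.mul_smul, Matrix.smul_mul, Finset.smul_sum]

lemma cases_snoc {α : Sort*} (i : α) {n : ℕ} (f : Fin n → α) (a : α) :
    (Fin.cases i (Fin.snoc f a) : Fin (n + 2) → α)
      = Fin.snoc (Fin.cases i f : Fin (n + 1) → α) a := by
  funext x
  refine Fin.lastCases ?_ (fun y => ?_) x
  · conv_lhs => rw [← Fin.succ_last]
    rw [Fin.cases_succ, Fin.snoc_last, Fin.snoc_last]
  · refine Fin.cases ?_ (fun k => ?_) y
    · simp
    · conv_lhs => rw [← Fin.succ_castSucc, Fin.cases_succ, Fin.snoc_castSucc]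
      rw [Fin.snoc_castSucc]
      simp

lemma strict_lb {t n : ℕ} {σ : Fin n → Fin (t + 1)} (hmono : StrictMono σ)
    (h1 : ∀ k, 1 ≤ (σ k : ℕ)) : ∀ k : Fin n, (k : ℕ) + 1 ≤ (σ k : ℕ) := by
  intro ⟨k, hk⟩
  induction k with
  | zero => exact h1 _
  | succ j ih =>
    have hj : j < n := by omega
    have h2 := hmono (show (⟨j, hj⟩ : Fin n) < ⟨j + 1, hk⟩ by simp [Fin.lt_def])
    have h3 := ih hj
    rw [Fin.lt_def] at h2
    simp only [Fin.val_mk] at h2 h3 ⊢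
    omega

/-- extended measurement-time sequence as naturals -/
noncomputable def sigN {t n : ℕ} (σ : Fin n → Fin (t + 1)) : Fin (n + 1) → ℕ :=
  Fin.cases 0 (fun k => (σ k : ℕ))

/-- extended outcome path -/
def pathF {m n : ℕ} (i : Fin m) (ii : Fin n → Fin m) : Fin (n + 1) → Fin m :=
  Fin.cases i ii

noncomputable def pW (m : ℕ) (p : ℝ) (U : ℕ → Matrix (Fin m) (Fin m) ℂ) (t n : ℕ)
    (σ : Fin n → Fin (t + 1)) (i : Fin m) (ii : Fin n → Fin m) : ℝ :=
  p ^ n * (1 - p) ^ (t - n) *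
    ∏ k : Fin n, ‖(Uprod m U (sigN σ k.castSucc) (sigN σ k.succ))
      (pathF i ii k.succ) (pathF i ii k.castSucc)‖ ^ 2

noncomputable def mT (m : ℕ) (U : ℕ → Matrix (Fin m) (Fin m) ℂ) (t n : ℕ)
    (σ : Fin n → Fin (t + 1)) (i : Fin m) (ii : Fin n → Fin m) :
    Matrix (Fin m) (Fin m) ℂ :=
  Uprod m U (sigN σ (Fin.last n)) t *
    Matrix.single (pathF i ii (Fin.last n)) (pathF i ii (Fin.last n)) 1 *
    (Uprod m U (sigN σ (Fin.last n)) t)ᴴ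

def Fset (t n : ℕ) : Finset (Fin n → Fin (t + 1)) :=
  Finset.univ.filter (fun σ => StrictMono σ ∧ ∀ k, 1 ≤ (σ k : ℕ))

lemma sigN_le {t n : ℕ} (σ : Fin n → Fin (t + 1)) (k : Fin (n + 1)) : sigN σ k ≤ t := by
  refine Fin.cases ?_ (fun j => ?_) k <;> simp [sigN]
  exact Nat.lt_succ_iff.mp (σ j).isLt

lemma sigN_castSucc_comp {t n : ℕ} (σ : Fin n → Fin (t + 1)) :
    (sigN (fun k => (σ k).castSucc) : Fin (n + 1) → ℕ) = sigN σ := by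
  funext k
  refine Fin.cases ?_ (fun j => ?_) k <;> simp [sigN]

lemma sigN_snoc {t n : ℕ} (σ : Fin n → Fin (t + 1)) :
    (sigN (Fin.snoc (fun k => (σ k).castSucc) (Fin.last (t + 1)) : Fin (n+1) → Fin (t+2)))
      = Fin.snoc (sigN σ) (t + 1) := by
  have h1 : (fun k => ((Fin.snoc (fun k' => (σ k').castSucc) (Fin.last (t + 1)) :
        Fin (n + 1) → Fin (t + 2)) k : ℕ))
      = Fin.snoc (fun k' => ((σ k' : ℕ))) (t + 1) := by
    funext k
    refine Fin.lastCases ?_ (fun j => ?_) k <;> simp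
  unfold sigN
  rw [h1]
  exact cases_snoc 0 _ _

lemma pathF_snoc {m n : ℕ} (i : Fin m) (ii : Fin n → Fin m) (a : Fin m) :
    (pathF i (Fin.snoc ii a) : Fin (n + 2) → Fin m) = Fin.snoc (pathF i ii) a :=
  cases_snoc i ii a

lemma mem_Fset {t n : ℕ} {σ : Fin n → Fin (t + 1)} :
    σ ∈ Fset t n ↔ StrictMono σ ∧ ∀ k, 1 ≤ (σ k : ℕ) := by
  simp [Fset]

lemma termA (m : ℕ) (p : ℝ) (U : ℕ → Matrix (Fin m) (Fin m) ℂ) (t n : ℕ) (hn : n ≤ t)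
    (i : Fin m) (σ : Fin n → Fin (t + 1)) (ii : Fin n → Fin m) :
    (((1 - p) * pW m p U t n σ i ii : ℝ) : ℂ) •
        (U (t + 1) * mT m U t n σ i ii * (U (t + 1))ᴴ)
      = ((pW m p U (t + 1) n (fun k => (σ k).castSucc) i ii : ℝ) : ℂ) •
          mT m U (t + 1) n (fun k => (σ k).castSucc) i ii := by
  have e1 : pW m p U (t + 1) n (fun k => (σ k).castSucc) i ii
      = (1 - p) * pW m p U t n σ i ii := by
    unfold pW
    rw [sigN_castSucc_comp, show t + 1 - n = (t - n) + 1 by omega, pow_succ]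
    ring
  have e2 : mT m U (t + 1) n (fun k => (σ k).castSucc) i ii
      = U (t + 1) * mT m U t n σ i ii * (U (t + 1))ᴴ := by
    unfold mT
    rw [sigN_castSucc_comp, Uprod_succ_of_le m U (sigN_le σ (Fin.last n))]
    simp only [Matrix.conjTranspose_mul, Matrix.mul_assoc]
  rw [e1, e2]

lemma sumA (m : ℕ) (p : ℝ) (U : ℕ → Matrix (Fin m) (Fin m) ℂ) (t n : ℕ) (hn : n ≤ t)
    (i : Fin m) :
    ∑ σ ∈ Fset t n, ∑ ii : Fin n → Fin m,
        (((1 - p) * pW m p U t n σ i ii : ℝ) : ℂ) •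
          (U (t + 1) * mT m U t n σ i ii * (U (t + 1))ᴴ)
      = ∑ σ ∈ (Fset (t + 1) n).filter (fun σ => ∀ k, (σ k : ℕ) ≤ t),
          ∑ ii : Fin n → Fin m,
            ((pW m p U (t + 1) n σ i ii : ℝ) : ℂ) • mT m U (t + 1) n σ i ii := by
  refine Finset.sum_nbij' (fun σ => fun k => (σ k).castSucc)
    (fun σ => fun k => (⟨min (σ k : ℕ) t, by omega⟩ : Fin (t + 1)))
    ?_ ?_ ?_ ?_ ?_
  · intro σ hσ
    rw [mem_Fset] at hσ
    rw [Finset.mem_filter, mem_Fset]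
    refine ⟨⟨fun x y h => ?_, fun k => ?_⟩, fun k => ?_⟩
    · simpa [Fin.castSucc_lt_castSucc_iff] using hσ.1 h
    · simpa using hσ.2 k
    · simpa using Nat.lt_succ_iff.mp (σ k).isLt
  · intro σ hσ
    rw [Finset.mem_filter, mem_Fset] at hσ
    rw [mem_Fset]
    refine ⟨fun x y h => ?_, fun k => ?_⟩
    · have h0 := hσ.1.1 h
      rw [Fin.lt_def] at h0 ⊢
      have h1 := hσ.2 x
      have h2 := hσ.2 y
      show min ((σ x : ℕ)) t < min ((σ y : ℕ)) t
      omega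
    · have h1 := hσ.1.2 k
      have h2 := hσ.2 k
      show 1 ≤ min ((σ k : ℕ)) t
      omega
  · intro σ hσ
    funext k
    apply Fin.ext
    simp [Nat.min_eq_left (Nat.lt_succ_iff.mp (σ k).isLt)]
  · intro σ hσ
    rw [Finset.mem_filter] at hσ
    funext k
    apply Fin.ext
    have := hσ.2 k
    simp [Nat.min_eq_left this]
  · intro σ hσ
    exact Finset.sum_congr rfl fun ii _ => termA m p U t n hn i σ ii

def snocEquiv (m n : ℕ) : ((Fin n → Fin m) × Fin m) ≃ (Fin (n + 1) → Fin m) where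
  toFun x := Fin.snoc x.1 x.2
  invFun g := (fun k => g k.castSucc, g (Fin.last n))
  left_inv x := by
    refine Prod.ext ?_ ?_ <;> simp
  right_inv g := by
    funext k
    refine Fin.lastCases ?_ (fun j => ?_) k <;> simp

lemma termB (m : ℕ) (p : ℝ) (U : ℕ → Matrix (Fin m) (Fin m) ℂ) (t n : ℕ)
    (i : Fin m) (σ : Fin n → Fin (t + 1)) (ii : Fin n → Fin m) (a : Fin m) :
    pW m p U (t + 1) (n + 1)
        (Fin.snoc (fun k => (σ k).castSucc) (Fin.last (t + 1))) i (Fin.snoc ii a)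
      = p * ‖(U (t + 1) * Uprod m U (sigN σ (Fin.last n)) t) a
            (pathF i ii (Fin.last n))‖ ^ 2 * pW m p U t n σ i ii := by
  unfold pW
  rw [sigN_snoc, pathF_snoc, Fin.prod_univ_castSucc]
  have hterm : ∀ k : Fin n,
      ‖(Uprod m U ((Fin.snoc (sigN σ) (t + 1) : Fin (n + 2) → ℕ) k.castSucc.castSucc)
          ((Fin.snoc (sigN σ) (t + 1) : Fin (n + 2) → ℕ) k.castSucc.succ))
        ((Fin.snoc (pathF i ii) a : Fin (n + 2) → Fin m) k.castSucc.succ)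
        ((Fin.snoc (pathF i ii) a : Fin (n + 2) → Fin m) k.castSucc.castSucc)‖ ^ 2
      = ‖(Uprod m U (sigN σ k.castSucc) (sigN σ k.succ))
          (pathF i ii k.succ) (pathF i ii k.castSucc)‖ ^ 2 := by
    intro k
    rw [Fin.succ_castSucc, Fin.snoc_castSucc, Fin.snoc_castSucc, Fin.snoc_castSucc,
      Fin.snoc_castSucc]
  rw [Finset.prod_congr rfl fun k _ => hterm k]
  rw [Fin.succ_last, Fin.snoc_castSucc, Fin.snoc_castSucc, Fin.snoc_last, Fin.snoc_last]
  rw [Uprod_succ_of_le m U (sigN_le σ (Fin.last n))]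
  rw [Nat.succ_sub_succ, pow_succ]
  ring

lemma mT_B (m : ℕ) (U : ℕ → Matrix (Fin m) (Fin m) ℂ) (t n : ℕ)
    (i : Fin m) (σ : Fin n → Fin (t + 1)) (ii : Fin n → Fin m) (a : Fin m) :
    mT m U (t + 1) (n + 1)
        (Fin.snoc (fun k => (σ k).castSucc) (Fin.last (t + 1))) i (Fin.snoc ii a)
      = Matrix.single a a 1 := by
  unfold mT
  rw [sigN_snoc, pathF_snoc]
  rw [Fin.snoc_last, Fin.snoc_last, Uprod_self]
  simp

lemma lastval {t n : ℕ} {σ : Fin (n + 1) → Fin (t + 2)} (hmono : StrictMono σ)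
    (hnq : ¬ ∀ k, (σ k : ℕ) ≤ t) : (σ (Fin.last n) : ℕ) = t + 1 := by
  rw [not_forall] at hnq
  obtain ⟨k0, hk0⟩ := hnq
  have h1 : (σ k0 : ℕ) ≤ (σ (Fin.last n) : ℕ) := by
    have := hmono.monotone (Fin.le_last k0)
    exact this
  have h2 := (σ (Fin.last n)).isLt
  omega

lemma midval {t n : ℕ} {σ : Fin (n + 1) → Fin (t + 2)} (hmono : StrictMono σ)
    (hnq : ¬ ∀ k, (σ k : ℕ) ≤ t) (j : Fin n) : (σ j.castSucc : ℕ) ≤ t := by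
  have h1 : σ j.castSucc < σ (Fin.last n) := hmono (Fin.castSucc_lt_last j)
  rw [Fin.lt_def, lastval hmono hnq] at h1
  omega

lemma sumB (m : ℕ) (p : ℝ) (U : ℕ → Matrix (Fin m) (Fin m) ℂ) (t n : ℕ) (i : Fin m) :
    ∑ σ ∈ Fset t n, ∑ ii : Fin n → Fin m, ∑ a : Fin m,
        ((p * ‖(U (t + 1) * Uprod m U (sigN σ (Fin.last n)) t) a
              (pathF i ii (Fin.last n))‖ ^ 2 * pW m p U t n σ i ii : ℝ) : ℂ) •
          Matrix.single a a 1
      = ∑ σ ∈ (Fset (t + 1) (n + 1)).filter (fun σ => ¬ ∀ k, (σ k : ℕ) ≤ t),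
          ∑ ii : Fin (n + 1) → Fin m,
            ((pW m p U (t + 1) (n + 1) σ i ii : ℝ) : ℂ) • mT m U (t + 1) (n + 1) σ i ii := by
  refine Finset.sum_nbij'
    (fun σ => (Fin.snoc (fun k => (σ k).castSucc) (Fin.last (t + 1)) : Fin (n+1) → Fin (t+2)))
    (fun σ => fun k => (⟨min ((σ k.castSucc : ℕ)) t, by omega⟩ : Fin (t + 1)))
    ?_ ?_ ?_ ?_ ?_
  · intro σ hσ
    rw [mem_Fset] at hσ
    rw [Finset.mem_filter, mem_Fset]
    refine ⟨⟨?_, ?_⟩, ?_⟩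
    · rw [Fin.strictMono_iff_lt_succ]
      intro k
      rcases Fin.eq_castSucc_or_eq_last k.succ with ⟨j, hj⟩ | hj
      · rw [hj]
        simp only [Fin.snoc_castSucc, Fin.castSucc_lt_castSucc_iff]
        apply hσ.1
        have hv : (k.succ : ℕ) = (j.castSucc : ℕ) := by rw [hj]
        rw [Fin.lt_def]
        simp only [Fin.val_succ, Fin.coe_castSucc] at hv ⊢
        omega
      · rw [hj]
        simp only [Fin.snoc_castSucc, Fin.snoc_last]
        exact Fin.castSucc_lt_last _
    · intro k
      refine Fin.lastCases ?_ (fun j => ?_) k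
      · simp only [Fin.snoc_last]
        simp
      · simp only [Fin.snoc_castSucc]
        simpa using hσ.2 j
    · intro h
      have := h (Fin.last n)
      simp only [Fin.snoc_last] at this
      simp [Fin.val_last] at this
  · intro σ hσ
    rw [Finset.mem_filter, mem_Fset] at hσ
    rw [mem_Fset]
    refine ⟨fun x y h => ?_, fun k => ?_⟩
    · rw [Fin.lt_def]
      show min ((σ x.castSucc : ℕ)) t < min ((σ y.castSucc : ℕ)) t
      have h1 : σ x.castSucc < σ y.castSucc :=
        hσ.1.1 (Fin.castSucc_lt_castSucc_iff.mpr h)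
      rw [Fin.lt_def] at h1
      have h2 := midval hσ.1.1 hσ.2 x
      have h3 := midval hσ.1.1 hσ.2 y
      omega
    · show 1 ≤ min ((σ k.castSucc : ℕ)) t
      have h1 := hσ.1.2 k.castSucc
      have h2 := midval hσ.1.1 hσ.2 k
      omega
  · intro σ hσ
    funext k
    apply Fin.ext
    show min (((Fin.snoc (fun k => (σ k).castSucc) (Fin.last (t + 1)) :
        Fin (n+1) → Fin (t+2)) k.castSucc : ℕ)) t = (σ k : ℕ)
    simp only [Fin.snoc_castSucc]
    simpa using Nat.min_eq_left (Nat.lt_succ_iff.mp (σ k).isLt)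
  · intro σ hσ
    rw [Finset.mem_filter, mem_Fset] at hσ
    funext k
    refine Fin.lastCases ?_ (fun j => ?_) k
    · simp only [Fin.snoc_last]
      apply Fin.ext
      rw [Fin.val_last, lastval hσ.1.1 hσ.2]
    · simp only [Fin.snoc_castSucc]
      apply Fin.ext
      simpa using Nat.min_eq_left (midval hσ.1.1 hσ.2 j)
  · intro σ hσ
    rw [← Fintype.sum_equiv (snocEquiv m n)
      (fun x => ((pW m p U (t + 1) (n + 1)
          (Fin.snoc (fun k => (σ k).castSucc) (Fin.last (t + 1))) i
          (Fin.snoc x.1 x.2) : ℝ) : ℂ) •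
        mT m U (t + 1) (n + 1)
          (Fin.snoc (fun k => (σ k).castSucc) (Fin.last (t + 1))) i (Fin.snoc x.1 x.2))
      _ (fun x => rfl)]
    rw [Fintype.sum_prod_type]
    refine Finset.sum_congr rfl fun ii _ => Finset.sum_congr rfl fun a _ => ?_
    rw [termB, mT_B]

lemma Afilter_empty (t : ℕ) :
    (Fset (t + 1) (t + 1)).filter (fun σ => ∀ k, (σ k : ℕ) ≤ t) = ∅ := by
  rw [Finset.filter_eq_empty_iff]
  intro σ hσ
  rw [mem_Fset] at hσ
  intro h
  have h1 := strict_lb hσ.1 hσ.2 (Fin.last t)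
  have h2 := h (Fin.last t)
  rw [Fin.val_last] at h1
  omega

lemma Bfilter_empty (t : ℕ) :
    (Fset (t + 1) 0).filter (fun σ : Fin 0 → Fin (t + 2) => ¬ ∀ k, (σ k : ℕ) ≤ t) = ∅ := by
  rw [Finset.filter_eq_empty_iff]
  intro σ _
  intro h
  exact h (fun k => k.elim0)

lemma entry_mT (m : ℕ) (U : ℕ → Matrix (Fin m) (Fin m) ℂ) (t n : ℕ)
    (σ : Fin n → Fin (t + 1)) (i : Fin m) (ii : Fin n → Fin m) (a : Fin m) :
    (U (t + 1) * mT m U t n σ i ii * (U (t + 1))ᴴ) a a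
      = ((‖(U (t + 1) * Uprod m U (sigN σ (Fin.last n)) t) a
            (pathF i ii (Fin.last n))‖ ^ 2 : ℝ) : ℂ) := by
  have e : U (t + 1) * mT m U t n σ i ii * (U (t + 1))ᴴ
      = (U (t + 1) * Uprod m U (sigN σ (Fin.last n)) t) *
          Matrix.single (pathF i ii (Fin.last n)) (pathF i ii (Fin.last n)) 1 *
          (U (t + 1) * Uprod m U (sigN σ (Fin.last n)) t)ᴴ := by
    unfold mT
    simp only [Matrix.conjTranspose_mul, Matrix.mul_assoc]
  rw [e, sandwich_diag]

lemma trace_e_mul (m : ℕ) (j : Fin m) (M : Matrix (Fin m) (Fin m) ℂ) :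
    Matrix.trace (Matrix.single j j 1 * M) = M j j := by
  simp only [Matrix.trace, Matrix.diag_apply, Matrix.mul_apply, Matrix.single,
    Matrix.of_apply, ite_and, ite_mul, zero_mul, one_mul]
  rw [Finset.sum_comm]
  simp [Finset.sum_ite_eq]

lemma rho_eq (m : ℕ) (p : ℝ) (hp0 : 0 ≤ p) (hp1 : p ≤ 1)
    (U : ℕ → Matrix (Fin m) (Fin m) ℂ) (i : Fin m) (t : ℕ) :
    rhoSeq m p U (Matrix.single i i 1) t
      = ∑ n ∈ Finset.range (t + 1), ∑ σ ∈ Fset t n, ∑ ii : Fin n → Fin m,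
          ((pW m p U t n σ i ii : ℝ) : ℂ) • mT m U t n σ i ii := by
  induction t with
  | zero =>
    rw [show rhoSeq m p U (Matrix.single i i 1) 0
        = Matrix.single i i 1 from rfl]
    rw [Finset.sum_range_one]
    have hFset : Fset 0 0 = (Finset.univ : Finset (Fin 0 → Fin 1)) := by
      ext σ
      simp only [Fset, Finset.mem_filter, Finset.mem_univ, true_and, iff_true]
      exact ⟨fun x y h => x.elim0, fun k => k.elim0⟩
    rw [hFset, Fintype.sum_unique, Fintype.sum_unique]
    unfold pW mT pathF
    simp [Uprod, show (Fin.last 0) = 0 from rfl]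
  | succ t ih =>
    rw [show rhoSeq m p U (Matrix.single i i 1) (t + 1)
        = decohStep m p (U (t + 1)) (rhoSeq m p U (Matrix.single i i 1) t) from rfl]
    rw [ih, decohStep_sum]
    have key : ∀ n ∈ Finset.range (t + 1),
        decohStep m p (U (t + 1)) (∑ σ ∈ Fset t n, ∑ ii : Fin n → Fin m,
            ((pW m p U t n σ i ii : ℝ) : ℂ) • mT m U t n σ i ii)
          = (∑ σ ∈ (Fset (t + 1) n).filter (fun σ => ∀ k, (σ k : ℕ) ≤ t),
              ∑ ii : Fin n → Fin m,
                ((pW m p U (t + 1) n σ i ii : ℝ) : ℂ) • mT m U (t + 1) n σ i ii)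
            + (∑ σ ∈ (Fset (t + 1) (n + 1)).filter (fun σ => ¬ ∀ k, (σ k : ℕ) ≤ t),
                ∑ ii : Fin (n + 1) → Fin m,
                  ((pW m p U (t + 1) (n + 1) σ i ii : ℝ) : ℂ) •
                    mT m U (t + 1) (n + 1) σ i ii) := by
      intro n hn
      have hn' : n ≤ t := by
        rw [Finset.mem_range] at hn
        omega
      rw [decohStep_sum]
      have step1 : ∀ σ ∈ Fset t n,
          decohStep m p (U (t + 1)) (∑ ii : Fin n → Fin m,
              ((pW m p U t n σ i ii : ℝ) : ℂ) • mT m U t n σ i ii)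
            = (∑ ii : Fin n → Fin m,
                (((1 - p) * pW m p U t n σ i ii : ℝ) : ℂ) •
                  (U (t + 1) * mT m U t n σ i ii * (U (t + 1))ᴴ))
              + ∑ ii : Fin n → Fin m, ∑ a : Fin m,
                  ((p * ‖(U (t + 1) * Uprod m U (sigN σ (Fin.last n)) t) a
                        (pathF i ii (Fin.last n))‖ ^ 2 * pW m p U t n σ i ii : ℝ) : ℂ) •
                    Matrix.single a a 1 := by
        intro σ _
        rw [decohStep_sum, ← Finset.sum_add_distrib]
        refine Finset.sum_congr rfl fun ii _ => ?_
        rw [decohStep_smul, decohStep_eq m p hp0 hp1, smul_add, Finset.smul_sum]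
        congr 1
        · rw [smul_smul]
          push_cast
          ring_nf
        · refine Finset.sum_congr rfl fun a _ => ?_
          rw [smul_smul, entry_mT]
          push_cast
          ring_nf
      rw [Finset.sum_congr rfl step1, Finset.sum_add_distrib,
        sumA m p U t n hn' i, sumB m p U t n i]
    rw [Finset.sum_congr rfl key, Finset.sum_add_distrib]
    have splitR : ∑ n ∈ Finset.range (t + 2), ∑ σ ∈ Fset (t + 1) n,
          ∑ ii : Fin n → Fin m,
            ((pW m p U (t + 1) n σ i ii : ℝ) : ℂ) • mT m U (t + 1) n σ i ii
        = (∑ n ∈ Finset.range (t + 2),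
            ∑ σ ∈ (Fset (t + 1) n).filter (fun σ => ∀ k, (σ k : ℕ) ≤ t),
              ∑ ii : Fin n → Fin m,
                ((pW m p U (t + 1) n σ i ii : ℝ) : ℂ) • mT m U (t + 1) n σ i ii)
          + (∑ n ∈ Finset.range (t + 2),
              ∑ σ ∈ (Fset (t + 1) n).filter (fun σ => ¬ ∀ k, (σ k : ℕ) ≤ t),
                ∑ ii : Fin n → Fin m,
                  ((pW m p U (t + 1) n σ i ii : ℝ) : ℂ) • mT m U (t + 1) n σ i ii) := by
      rw [← Finset.sum_add_distrib]
      exact Finset.sum_congr rfl fun n _ =>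
        (Finset.sum_filter_add_sum_filter_not (Fset (t + 1) n) _ _).symm
    rw [splitR]
    congr 1
    · conv_rhs => rw [Finset.sum_range_succ]
      rw [Afilter_empty, Finset.sum_empty, add_zero]
    · conv_rhs => rw [Finset.sum_range_succ' _ (t + 1)]
      rw [Bfilter_empty, Finset.sum_empty, add_zero]

lemma trace_term (m : ℕ) (U : ℕ → Matrix (Fin m) (Fin m) ℂ) (t n : ℕ)
    (σ : Fin n → Fin (t + 1)) (i j : Fin m) (ii : Fin n → Fin m) :
    Matrix.trace (Matrix.single j j 1 * mT m U t n σ i ii)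
      = ((‖(Uprod m U (sigN σ (Fin.last n)) t) j (pathF i ii (Fin.last n))‖ ^ 2 : ℝ) : ℂ) := by
  rw [trace_e_mul]
  unfold mT
  rw [sandwich_diag]

/-- path-integral representation of `Tr(|j⟩⟨j| ρ_t)`.
The outer sum is over the number `n` of measurement times, the next sum over strictly
increasing sequences `0 < σ 0 < σ 1 < ⋯ < σ (n-1) ≤ t` (encoded as strictly monotone maps
`σ : Fin n → Fin (t+1)` with all values `≥ 1`), and the inner sum over the outcomes
`i_1, …, i_n ∈ {1,…,m}` (encoded as `ii : Fin n → Fin m`); `σ` and `ii` are extended by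
`σ_0 = 0` and `i_0 = i` via `Fin.cases`. -/
theorem stmt1 (m : ℕ) (p : ℝ) (hp0 : 0 ≤ p) (hp1 : p ≤ 1)
    (U : ℕ → Matrix (Fin m) (Fin m) ℂ)
    (hU : ∀ n, U n ∈ Matrix.unitaryGroup (Fin m) ℂ)
    (t : ℕ) (ht : 1 ≤ t) (i j : Fin m) :
    Matrix.trace (Matrix.single j j 1 *
        rhoSeq m p U (Matrix.single i i 1) t) =
      ((∑ n ∈ Finset.range (t + 1),
        ∑ σ ∈ Finset.univ.filter
            (fun σ : Fin n → Fin (t + 1) => StrictMono σ ∧ ∀ k, 1 ≤ (σ k : ℕ)),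
          ∑ ii : Fin n → Fin m,
            p ^ n * (1 - p) ^ (t - n) *
              (‖(Uprod m U ((Fin.cases 0 (fun k => (σ k : ℕ)) : Fin (n+1) → ℕ) (Fin.last n)) t)
                  j ((Fin.cases i ii : Fin (n+1) → Fin m) (Fin.last n))‖ ^ 2 *
               ∏ k : Fin n,
                 ‖(Uprod m U ((Fin.cases 0 (fun k' => (σ k' : ℕ)) : Fin (n+1) → ℕ) k.castSucc)
                      ((Fin.cases 0 (fun k' => (σ k' : ℕ)) : Fin (n+1) → ℕ) k.succ))
                    ((Fin.cases i ii : Fin (n+1) → Fin m) k.succ)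
                    ((Fin.cases i ii : Fin (n+1) → Fin m) k.castSucc)‖ ^ 2) : ℝ) : ℂ) := by
  rw [rho_eq m p hp0 hp1 U i t]
  unfold Fset
  push_cast
  rw [Finset.mul_sum, Matrix.trace_sum]
  refine Finset.sum_congr rfl fun n _ => ?_
  rw [Finset.mul_sum, Matrix.trace_sum]
  refine Finset.sum_congr rfl fun σ _ => ?_
  rw [Finset.mul_sum, Matrix.trace_sum]
  refine Finset.sum_congr rfl fun ii _ => ?_
  rw [Matrix.mul_smul, Matrix.trace_smul, trace_term, smul_eq_mul]
  unfold pW sigN pathF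
  push_cast
  ring
end

section
/- Time-inhomogeneous ergodic theorem: let Σ = {1,…,m} be a finite state space, let Π be an m×m matrix with nonnegative entries, identical rows (Π_{ij} = Π_{1j} for all i, j), and row sums 1, and let (P_k)_{k≥1} be Markov (row-stochastic) transition matrices on Σ. Suppose there is k_0 such that for all k ≥ k_0 one has Π P_k = Π and P_k ≥ δ_k Π entrywise, where 0 ≤ δ_k ≤ 1. If ∏_{k=k_0}^{∞} (1 − δ_k) = 0, then for every s with 1 ≤ s ≤ k_0, the matrix product P_s P_{s+1} ⋯ P_n converges to Π as n → ∞. -/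
open Matrix BigOperators Filter

/-- `Mprod P s n = P_s · P_{s+1} ⋯ P_n` (ordered matrix product; identity if `n < s`). -/
noncomputable def Mprod (m : ℕ) (P : ℕ → Matrix (Fin m) (Fin m) ℝ) (s n : ℕ) :
    Matrix (Fin m) (Fin m) ℝ :=
  ((List.range (n + 1 - s)).map (fun k => P (s + k))).prod

/-- A row-stochastic (Markov) matrix: nonnegative entries, each row summing to 1. -/
def IsStochastic {m : ℕ} (P : Matrix (Fin m) (Fin m) ℝ) : Prop :=
  (∀ i j, 0 ≤ P i j) ∧ ∀ i, ∑ j, P i j = 1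

lemma Mprod_of_lt (m : ℕ) (P : ℕ → Matrix (Fin m) (Fin m) ℝ) (s n : ℕ) (h : n < s) :
    Mprod m P s n = 1 := by
  simp [Mprod, Nat.sub_eq_zero_of_le h]

lemma Mprod_succ (m : ℕ) (P : ℕ → Matrix (Fin m) (Fin m) ℝ) (s n : ℕ) (h : s ≤ n + 1) :
    Mprod m P s (n + 1) = Mprod m P s n * P (n + 1) := by
  have h1 : n + 1 + 1 - s = (n + 1 - s) + 1 := by omega
  have h2 : s + (n + 1 - s) = n + 1 := by omega
  simp [Mprod, h1, List.range_succ, h2]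

lemma Mprod_split (m : ℕ) (P : ℕ → Matrix (Fin m) (Fin m) ℝ) (s t n : ℕ)
    (hs : 1 ≤ t) (hst : s ≤ t) (htn : t ≤ n + 1) :
    Mprod m P s n = Mprod m P s (t - 1) * Mprod m P t n := by
  have h1 : n + 1 - s = (t - s) + (n + 1 - t) := by omega
  have h2 : t - 1 + 1 - s = t - s := by omega
  rw [Mprod, Mprod, Mprod, h1, h2, List.range_add, List.map_append, List.prod_append]
  congr 1
  rw [List.map_map]
  congr 1
  apply List.map_congr_left
  intro a _
  simp only [Function.comp_apply]
  have h3 : s + (t - s + a) = t + a := by omega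
  rw [h3]

lemma isStochastic_one (m : ℕ) : IsStochastic (1 : Matrix (Fin m) (Fin m) ℝ) := by
  constructor
  · intro i j
    by_cases h : i = j <;> simp [Matrix.one_apply, h]
  · intro i
    simp [Matrix.one_apply]

lemma isStochastic_mul {m : ℕ} {A B : Matrix (Fin m) (Fin m) ℝ}
    (hA : IsStochastic A) (hB : IsStochastic B) : IsStochastic (A * B) := by
  constructor
  · intro i j
    rw [Matrix.mul_apply]
    exact Finset.sum_nonneg fun k _ => mul_nonneg (hA.1 i k) (hB.1 k j)
  · intro i
    simp only [Matrix.mul_apply]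
    rw [Finset.sum_comm]
    simp only [← Finset.mul_sum]
    simp [hB.2, hA.2 i]

lemma isStochastic_list_prod {m : ℕ} (L : List (Matrix (Fin m) (Fin m) ℝ))
    (h : ∀ A ∈ L, IsStochastic A) : IsStochastic L.prod := by
  induction L with
  | nil => simpa using isStochastic_one m
  | cons A L ih =>
      rw [List.prod_cons]
      exact isStochastic_mul (h A (by simp)) (ih fun B hB => h B (by simp [hB]))

lemma isStochastic_Mprod (m : ℕ) (P : ℕ → Matrix (Fin m) (Fin m) ℝ)
    (hP : ∀ k, 1 ≤ k → IsStochastic (P k)) (s n : ℕ) (hs : 1 ≤ s) :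
    IsStochastic (Mprod m P s n) := by
  apply isStochastic_list_prod
  intro A hA
  simp only [List.mem_map, List.mem_range] at hA
  obtain ⟨k, _, rfl⟩ := hA
  exact hP _ (by omega)

lemma row_diff_le_two {m : ℕ} {M : Matrix (Fin m) (Fin m) ℝ}
    (hM : IsStochastic M) (i i' : Fin m) : ∑ j, |M i j - M i' j| ≤ 2 := by
  calc ∑ j, |M i j - M i' j| ≤ ∑ j, (|M i j| + |M i' j|) :=
        Finset.sum_le_sum fun j _ => abs_sub _ _
    _ = ∑ j, M i j + ∑ j, M i' j := by
        rw [Finset.sum_add_distrib]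
        congr 1 <;> exact Finset.sum_congr rfl fun j _ => abs_of_nonneg (hM.1 _ j)
    _ = 2 := by rw [hM.2 i, hM.2 i']; norm_num

lemma step_contract {m : ℕ} (Pi : Matrix (Fin m) (Fin m) ℝ)
    (hPiRows : ∀ i i' j, Pi i j = Pi i' j) (hPiSum : ∀ i, ∑ j, Pi i j = 1)
    (Q : Matrix (Fin m) (Fin m) ℝ) (hQ : IsStochastic Q) (d : ℝ)
    (hLow : ∀ i j, d * Pi i j ≤ Q i j)
    (M : Matrix (Fin m) (Fin m) ℝ) (hM : ∀ i, ∑ j, M i j = 1) (i i' : Fin m) :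
    ∑ j, |(M * Q) i j - (M * Q) i' j| ≤ (1 - d) * ∑ j, |M i j - M i' j| := by
  set c : Fin m → ℝ := fun l => M i l - M i' l with hcdef
  have hc : ∑ l, c l = 0 := by
    simp only [hcdef, Finset.sum_sub_distrib, hM i, hM i', sub_self]
  have key : ∀ j, (M * Q) i j - (M * Q) i' j = ∑ l, c l * (Q l j - d * Pi l j) := by
    intro j
    have h0 : ∑ l, c l * (d * Pi l j) = 0 := by
      have e : ∀ l ∈ Finset.univ, c l * (d * Pi l j) = (d * Pi i j) * c l := by
        intro l _
        rw [hPiRows l i j]; ring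
      rw [Finset.sum_congr rfl e, ← Finset.mul_sum, hc, mul_zero]
    have e2 : ∀ l ∈ Finset.univ, c l * (Q l j - d * Pi l j)
        = c l * Q l j - c l * (d * Pi l j) := by intro l _; ring
    rw [Finset.sum_congr rfl e2, Finset.sum_sub_distrib, h0, sub_zero]
    simp only [Matrix.mul_apply, ← Finset.sum_sub_distrib]
    apply Finset.sum_congr rfl
    intro l _
    simp only [hcdef]; ring
  calc ∑ j, |(M * Q) i j - (M * Q) i' j|
      = ∑ j, |∑ l, c l * (Q l j - d * Pi l j)| := by
        apply Finset.sum_congr rfl; intro j _; rw [key j]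
    _ ≤ ∑ j, ∑ l, |c l| * (Q l j - d * Pi l j) := by
        apply Finset.sum_le_sum
        intro j _
        refine le_trans (Finset.abs_sum_le_sum_abs _ _) ?_
        apply Finset.sum_le_sum
        intro l _
        rw [abs_mul, abs_of_nonneg (sub_nonneg.2 (hLow l j))]
    _ = ∑ l, |c l| * ∑ j, (Q l j - d * Pi l j) := by
        rw [Finset.sum_comm]
        apply Finset.sum_congr rfl
        intro l _
        rw [Finset.mul_sum]
    _ = ∑ l, |c l| * (1 - d) := by
        apply Finset.sum_congr rfl
        intro l _
        congr 1
        rw [Finset.sum_sub_distrib, hQ.2 l, ← Finset.mul_sum, hPiSum l, mul_one]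
    _ = (1 - d) * ∑ j, |M i j - M i' j| := by
        rw [← Finset.sum_mul, mul_comm]

/-- time-inhomogeneous ergodic theorem: if `Π` is row-stochastic with
identical rows, the `P_k` are row-stochastic, and for all `k ≥ k₀` one has `Π P_k = Π` and
`P_k ≥ δ_k Π` entrywise with `0 ≤ δ_k ≤ 1`, and if `∏_{k=k₀}^{n}(1-δ_k) → 0`, then
`P_s P_{s+1} ⋯ P_n → Π` for every `1 ≤ s ≤ k₀`. -/
theorem stmt3 (m : ℕ) (Pi : Matrix (Fin m) (Fin m) ℝ)
    (hPiNonneg : ∀ i j, 0 ≤ Pi i j)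
    (hPiRows : ∀ i i' j, Pi i j = Pi i' j)
    (hPiSum : ∀ i, ∑ j, Pi i j = 1)
    (P : ℕ → Matrix (Fin m) (Fin m) ℝ)
    (hP : ∀ k, 1 ≤ k → IsStochastic (P k))
    (k0 : ℕ) (hk0 : 1 ≤ k0) (δ : ℕ → ℝ)
    (hδ : ∀ k, k0 ≤ k → 0 ≤ δ k ∧ δ k ≤ 1)
    (hInv : ∀ k, k0 ≤ k → Pi * P k = Pi)
    (hLower : ∀ k, k0 ≤ k → ∀ i j, δ k * Pi i j ≤ P k i j)
    (hProd : Tendsto (fun n => ∏ k ∈ Finset.Icc k0 n, (1 - δ k)) atTop (nhds 0)) :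
    ∀ s, 1 ≤ s → s ≤ k0 →
      Tendsto (fun n => Mprod m P s n) atTop (nhds Pi) := by
  intro s hs1 hsk0
  -- oscillation bound for the tail products
  have hosc : ∀ n i i', ∑ j, |Mprod m P k0 n i j - Mprod m P k0 n i' j|
      ≤ 2 * ∏ k ∈ Finset.Icc k0 n, (1 - δ k) := by
    intro n
    induction n with
    | zero =>
        intro i i'
        rw [Mprod_of_lt m P k0 0 (by omega), Finset.Icc_eq_empty (by omega)]
        simpa using row_diff_le_two (isStochastic_one m) i i'
    | succ n ih =>
        intro i i'
        by_cases hcase : k0 ≤ n + 1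
        · rw [Mprod_succ m P k0 n hcase]
          have hM := (isStochastic_Mprod m P hP k0 n hk0).2
          have hstep := step_contract Pi hPiRows hPiSum (P (n + 1)) (hP _ (by omega))
            (δ (n + 1)) (hLower _ hcase) (Mprod m P k0 n) hM i i'
          refine le_trans hstep ?_
          rw [Finset.prod_Icc_succ_top hcase]
          have h1d : 0 ≤ 1 - δ (n + 1) := by linarith [(hδ (n + 1) hcase).2]
          calc (1 - δ (n + 1)) * ∑ j, |Mprod m P k0 n i j - Mprod m P k0 n i' j|
              ≤ (1 - δ (n + 1)) * (2 * ∏ k ∈ Finset.Icc k0 n, (1 - δ k)) :=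
                mul_le_mul_of_nonneg_left (ih i i') h1d
            _ = 2 * ((∏ k ∈ Finset.Icc k0 n, (1 - δ k)) * (1 - δ (n + 1))) := by ring
        · rw [Mprod_of_lt m P k0 (n + 1) (by omega), Finset.Icc_eq_empty (by omega)]
          simpa using row_diff_le_two (isStochastic_one m) i i'
  -- invariance of Pi under the tail products
  have hPiT : ∀ n, Pi * Mprod m P k0 n = Pi := by
    intro n
    induction n with
    | zero => rw [Mprod_of_lt m P k0 0 (by omega), mul_one]
    | succ n ih =>
        by_cases hcase : k0 ≤ n + 1
        · rw [Mprod_succ m P k0 n hcase, ← mul_assoc, ih, hInv _ hcase]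
        · rw [Mprod_of_lt m P k0 (n + 1) (by omega), mul_one]
  -- entrywise bound for tail products
  have hentry : ∀ n i j, |Mprod m P k0 n i j - Pi i j|
      ≤ 2 * ∏ k ∈ Finset.Icc k0 n, (1 - δ k) := by
    intro n i j
    set T := Mprod m P k0 n with hT
    have hPieq : Pi i j = ∑ l, Pi i l * T l j := by
      conv_lhs => rw [← hPiT n]
      rw [Matrix.mul_apply]
    have hTeq : T i j = ∑ l, Pi i l * T i j := by
      rw [← Finset.sum_mul, hPiSum i, one_mul]
    rw [hTeq, hPieq, ← Finset.sum_sub_distrib]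
    refine le_trans (Finset.abs_sum_le_sum_abs _ _) ?_
    have hb : ∀ l ∈ Finset.univ, |Pi i l * T i j - Pi i l * T l j|
        ≤ Pi i l * (2 * ∏ k ∈ Finset.Icc k0 n, (1 - δ k)) := by
      intro l _
      rw [← mul_sub, abs_mul, abs_of_nonneg (hPiNonneg i l)]
      refine mul_le_mul_of_nonneg_left ?_ (hPiNonneg i l)
      refine le_trans ?_ (hosc n i l)
      exact Finset.single_le_sum (f := fun j' => |T i j' - T l j'|)
        (fun j' _ => abs_nonneg _) (Finset.mem_univ j)
    refine le_trans (Finset.sum_le_sum hb) ?_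
    rw [← Finset.sum_mul, hPiSum i, one_mul]
  -- entrywise bound for the full products
  have hA : IsStochastic (Mprod m P s (k0 - 1)) := isStochastic_Mprod m P hP s (k0 - 1) hs1
  have hbound : ∀ n, k0 ≤ n → ∀ i j, |Mprod m P s n i j - Pi i j|
      ≤ 2 * ∏ k ∈ Finset.Icc k0 n, (1 - δ k) := by
    intro n hn i j
    rw [Mprod_split m P s k0 n hk0 hsk0 (by omega)]
    set A := Mprod m P s (k0 - 1) with hAdef
    set T := Mprod m P k0 n with hTdef
    have h1 : (A * T) i j - Pi i j = ∑ l, A i l * (T l j - Pi l j) := by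
      have e2 : ∀ l ∈ Finset.univ, A i l * (T l j - Pi l j)
          = A i l * T l j - A i l * Pi l j := by intro l _; ring
      rw [Finset.sum_congr rfl e2, Finset.sum_sub_distrib, Matrix.mul_apply]
      congr 1
      have e3 : ∀ l ∈ Finset.univ, A i l * Pi l j = A i l * Pi i j := by
        intro l _; rw [hPiRows l i j]
      rw [Finset.sum_congr rfl e3, ← Finset.sum_mul, hA.2 i, one_mul]
    rw [h1]
    refine le_trans (Finset.abs_sum_le_sum_abs _ _) ?_
    have hb : ∀ l ∈ Finset.univ, |A i l * (T l j - Pi l j)|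
        ≤ A i l * (2 * ∏ k ∈ Finset.Icc k0 n, (1 - δ k)) := by
      intro l _
      rw [abs_mul, abs_of_nonneg (hA.1 i l)]
      exact mul_le_mul_of_nonneg_left (hentry n l j) (hA.1 i l)
    refine le_trans (Finset.sum_le_sum hb) ?_
    rw [← Finset.sum_mul, hA.2 i, one_mul]
  -- conclude convergence entrywise
  refine tendsto_pi_nhds.2 ?_
  intro i
  rw [tendsto_pi_nhds]
  intro j
  have h2p : Tendsto (fun n => 2 * ∏ k ∈ Finset.Icc k0 n, (1 - δ k)) atTop (nhds 0) := by
    simpa using hProd.const_mul 2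
  have hsq : Tendsto (fun n => Mprod m P s n i j - Pi i j) atTop (nhds 0) := by
    apply squeeze_zero_norm' ?_ h2p
    filter_upwards [eventually_ge_atTop k0] with n hn
    simpa [Real.norm_eq_abs] using hbound n hn i j
  have := hsq.add_const (Pi i j)
  simpa using this
end

section
/- Let G be an m×m Hermitian matrix with |G_{jk}| ≥ ε₀ > 0 for all j, k, let θ ≥ 0 satisfy θ ≤ min(ε₀/(4‖G‖_∞²), 1/(4‖G‖_∞)), and let U = exp(iθG). Then for all j ≠ k, the matrix entry satisfies |U_{jk}| ≥ (1/2)·θ·ε₀. -/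
open Matrix BigOperators

set_option maxHeartbeats 1000000

/-- The operator norm of a matrix acting on `(ℂ^m, ‖·‖_∞)`: the maximum row sum of
absolute values of entries. -/
noncomputable def infNorm {m : ℕ} (G : Matrix (Fin m) (Fin m) ℂ) : ℝ :=
  ⨆ j, ∑ k, ‖G j k‖

/-- if `G` is Hermitian with `|G_{jk}| ≥ ε₀ > 0` for all `j,k` and
`0 ≤ θ ≤ min(ε₀/(4‖G‖_∞²), 1/(4‖G‖_∞))`, then `U = exp(iθG)` satisfies
`|U_{jk}| ≥ θε₀/2` for all `j ≠ k`. -/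
theorem stmt5 (m : ℕ) (G : Matrix (Fin m) (Fin m) ℂ) (hG : G.IsHermitian)
    (ε₀ : ℝ) (hε₀ : 0 < ε₀) (hGlow : ∀ j k, ε₀ ≤ ‖G j k‖)
    (θ : ℝ) (hθ0 : 0 ≤ θ)
    (hθ : θ ≤ min (ε₀ / (4 * infNorm G ^ 2)) (1 / (4 * infNorm G)))
    (j k : Fin m) (hjk : j ≠ k) :
    θ * ε₀ / 2 ≤ ‖(NormedSpace.exp (((θ : ℂ) * Complex.I) • G)) j k‖ := by
  classical
  letI : SeminormedRing (Matrix (Fin m) (Fin m) ℂ) := Matrix.linftyOpSemiNormedRing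
  letI : NormedRing (Matrix (Fin m) (Fin m) ℂ) := Matrix.linftyOpNormedRing
  letI : NormedAlgebra ℂ (Matrix (Fin m) (Fin m) ℂ) := Matrix.linftyOpNormedAlgebra
  set A : Matrix (Fin m) (Fin m) ℂ := ((θ : ℂ) * Complex.I) • G with hA
  -- row sums are bounded by infNorm
  have hrow : ∀ i : Fin m, ∑ c, ‖G i c‖ ≤ infNorm G := fun i =>
    le_ciSup (f := fun i : Fin m => ∑ c, ‖G i c‖)
      (Set.Finite.bddAbove (Set.finite_range _)) i
  have hNpos : 0 < infNorm G :=
    lt_of_lt_of_le hε₀ <| (hGlow j j).trans <|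
      (Finset.single_le_sum (fun c _ => norm_nonneg (G j c)) (Finset.mem_univ j)).trans (hrow j)
  -- entries are bounded by the operator norm
  have entry_le : ∀ (B : Matrix (Fin m) (Fin m) ℂ) (a b : Fin m), ‖B a b‖ ≤ ‖B‖ := by
    intro B a b
    rw [Matrix.linfty_opNorm_def]
    have h1 : ‖B a b‖ ≤ ∑ c, ‖B a c‖ :=
      Finset.single_le_sum (fun c _ => norm_nonneg (B a c)) (Finset.mem_univ b)
    refine h1.trans ?_
    have h2 : (∑ c, ‖B a c‖₊) ≤ Finset.univ.sup fun i => ∑ c, ‖B i c‖₊ :=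
      Finset.le_sup (f := fun i => ∑ c, ‖B i c‖₊) (Finset.mem_univ a)
    calc ∑ c, ‖B a c‖ = ((∑ c, ‖B a c‖₊ : NNReal) : ℝ) := by
          rw [NNReal.coe_sum]; simp
      _ ≤ _ := NNReal.coe_le_coe.mpr h2
  -- operator norm of G is at most infNorm G
  have hGle : ‖G‖ ≤ infNorm G := by
    rw [Matrix.linfty_opNorm_def, ← Real.coe_toNNReal (infNorm G) hNpos.le]
    refine NNReal.coe_le_coe.mpr (Finset.sup_le fun i _ => ?_)
    rw [← NNReal.coe_le_coe, Real.coe_toNNReal _ hNpos.le, NNReal.coe_sum]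
    exact hrow i
  set N := θ * infNorm G with hNdef
  have hN0 : 0 ≤ N := mul_nonneg hθ0 hNpos.le
  have hAnorm : ‖A‖ ≤ N := by
    rw [hA, norm_smul]
    have hc : ‖(θ : ℂ) * Complex.I‖ = θ := by
      rw [norm_mul, Complex.norm_I, Complex.norm_real, Real.norm_eq_abs, abs_of_nonneg hθ0, mul_one]
    rw [hc, hNdef]
    exact mul_le_mul_of_nonneg_left hGle hθ0
  have hθ1 := (le_min_iff.mp hθ).1
  have hθ2 := (le_min_iff.mp hθ).2
  have hq : N ≤ 1 / 4 := by
    have h1 : θ * (4 * infNorm G) ≤ 1 :=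
      (le_div_iff₀ (by positivity : (0:ℝ) < 4 * infNorm G)).mp hθ2
    nlinarith
  have hp : θ * infNorm G ^ 2 ≤ ε₀ / 4 := by
    have h1 : θ * (4 * infNorm G ^ 2) ≤ ε₀ :=
      (le_div_iff₀ (by positivity : (0:ℝ) < 4 * infNorm G ^ 2)).mp hθ1
    nlinarith
  have hN2 : N ^ 2 ≤ θ * ε₀ / 4 := by
    have := mul_le_mul_of_nonneg_left hp hθ0
    rw [hNdef]; nlinarith
  -- evaluation at entry (j,k) as a continuous linear map
  let evalL : Matrix (Fin m) (Fin m) ℂ →ₗ[ℂ] ℂ :=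
    { toFun := fun B => B j k, map_add' := fun _ _ => rfl, map_smul' := fun _ _ => rfl }
  let evalCLM : Matrix (Fin m) (Fin m) ℂ →L[ℂ] ℂ :=
    LinearMap.mkContinuous evalL 1 (fun B => by
      show ‖B j k‖ ≤ 1 * ‖B‖
      simpa using entry_le B j k)
  have hexp : HasSum (fun n : ℕ => ((Nat.factorial n : ℂ))⁻¹ • A ^ n) (NormedSpace.exp A) :=
    NormedSpace.exp_series_hasSum_exp' (𝕂 := ℂ) A
  set a : ℕ → ℂ := fun n => (((Nat.factorial n : ℂ))⁻¹ • A ^ n) j k with ha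
  have hS : HasSum a ((NormedSpace.exp A) j k) := evalCLM.hasSum hexp
  have ha0 : a 0 = 0 := by
    simp [ha, Matrix.smul_apply, Matrix.one_apply_ne hjk]
  have ha1 : a 1 = A j k := by
    simp [ha]
  have htail : HasSum (fun n => a (n + 2)) ((NormedSpace.exp A) j k - A j k) := by
    have h := (hasSum_nat_add_iff' 2).mpr hS
    simpa [Finset.sum_range_succ, ha0, ha1] using h
  -- bound each tail term
  have hterm : ∀ n : ℕ, ‖a (n + 2)‖ ≤ N ^ 2 * (1 / 2) ^ (n + 1) := by
    intro n
    have hAn : ‖(A ^ (n + 2)) j k‖ ≤ ‖A‖ ^ (n + 2) :=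
      (entry_le _ j k).trans (norm_pow_le' A (Nat.succ_pos _))
    have hfact : (((Nat.factorial (n + 2) : ℕ) : ℝ))⁻¹ ≤ 1 / 2 := by
      rw [one_div]
      apply inv_anti₀ (by norm_num)
      exact_mod_cast Nat.factorial_le (by omega : 2 ≤ n + 2)
    have hA14 : ‖A‖ ≤ 1 / 4 := hAnorm.trans hq
    have hApow : ‖A‖ ^ (n + 2) ≤ N ^ 2 * (1 / 4) ^ n := by
      calc ‖A‖ ^ (n + 2) = ‖A‖ ^ 2 * ‖A‖ ^ n := by ring
        _ ≤ N ^ 2 * (1 / 4) ^ n :=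
          mul_le_mul (pow_le_pow_left₀ (norm_nonneg _) hAnorm 2)
            (pow_le_pow_left₀ (norm_nonneg _) hA14 n) (by positivity) (by positivity)
    calc ‖a (n + 2)‖ = (((Nat.factorial (n + 2) : ℕ) : ℝ))⁻¹ * ‖(A ^ (n + 2)) j k‖ := by
          simp [ha, Matrix.smul_apply, smul_eq_mul, norm_mul]
      _ ≤ (1 / 2) * (N ^ 2 * (1 / 4) ^ n) := by
          apply mul_le_mul hfact (hAn.trans hApow) (norm_nonneg _)
          norm_num
      _ = N ^ 2 * ((1 / 2) * (1 / 4) ^ n) := by ring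
      _ ≤ N ^ 2 * ((1 / 2) * (1 / 2) ^ n) := by
          have hpow : ((1:ℝ) / 4) ^ n ≤ (1 / 2) ^ n :=
            pow_le_pow_left₀ (by norm_num) (by norm_num) n
          have := mul_le_mul_of_nonneg_left hpow (by norm_num : (0:ℝ) ≤ 1/2)
          exact mul_le_mul_of_nonneg_left this (by positivity)
      _ = N ^ 2 * (1 / 2) ^ (n + 1) := by ring
  -- geometric bound for the tail sum
  have h2 : HasSum (fun n : ℕ => (1 / 2 : ℝ) ^ (n + 1)) 1 := by
    have h := hasSum_geometric_two' 1
    convert h using 2 with n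
    rw [one_div, inv_pow, pow_succ]
    norm_num
    ring
  have hgeo : HasSum (fun n : ℕ => N ^ 2 * (1 / 2) ^ (n + 1)) (N ^ 2) := by
    simpa using h2.mul_left (N ^ 2)
  have hsummable : Summable fun n => ‖a (n + 2)‖ :=
    Summable.of_nonneg_of_le (fun n => norm_nonneg _) hterm hgeo.summable
  have htail_norm : ‖(NormedSpace.exp A) j k - A j k‖ ≤ N ^ 2 := by
    rw [← htail.tsum_eq]
    calc ‖∑' n, a (n + 2)‖ ≤ ∑' n, ‖a (n + 2)‖ := norm_tsum_le_tsum_norm hsummable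
      _ ≤ ∑' n, N ^ 2 * (1 / 2) ^ (n + 1) := Summable.tsum_le_tsum hterm hsummable hgeo.summable
      _ = N ^ 2 := hgeo.tsum_eq
  have hA_jk : θ * ε₀ ≤ ‖A j k‖ := by
    rw [hA]
    have : ‖(((θ : ℂ) * Complex.I) • G) j k‖ = θ * ‖G j k‖ := by
      simp [Matrix.smul_apply, smul_eq_mul, norm_mul, Complex.norm_real, abs_of_nonneg hθ0]
    rw [this]
    exact mul_le_mul_of_nonneg_left (hGlow j k) hθ0
  have hdiff : ‖A j k‖ - ‖(NormedSpace.exp A) j k‖ ≤ ‖(NormedSpace.exp A) j k - A j k‖ := by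
    rw [norm_sub_rev]
    exact norm_sub_norm_le _ _
  have hnn : 0 ≤ θ * ε₀ := mul_nonneg hθ0 hε₀.le
  linarith
end

section
/- Let T_1, T_2, … be i.i.d. geometric random variables with success probability p ∈ (0,1] and let 0 < ζ ≤ 1. Then T_{n+1}² / (T_1 + T_2 + ⋯ + T_n)^ζ → 0 almost surely as n → ∞. -/
open MeasureTheory ProbabilityTheory Filter BigOperators

/-- if `T_1, T_2, …` are i.i.d. geometric with success probability
`p ∈ (0,1]` and `0 < ζ ≤ 1`, then `T_{n+1}²/(T_1 + ⋯ + T_n)^ζ → 0` almost surely.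
(Here the interarrival times are indexed from `0`, so `T k` plays the role of `T_{k+1}`.) -/
theorem stmt11 (p : ℝ) (hp0 : 0 < p) (hp1 : p ≤ 1) (ζ : ℝ) (hζ0 : 0 < ζ) (hζ1 : ζ ≤ 1)
    {Ω : Type*} [MeasureSpace Ω] [IsProbabilityMeasure (ℙ : Measure Ω)]
    (T : ℕ → Ω → ℕ) (hTmeas : ∀ n, Measurable (T n))
    (hTindep : iIndepFun T ℙ)
    (hTgeom : ∀ n k, 1 ≤ k →
      (ℙ {ω | T n ω = k} : ENNReal) = ENNReal.ofReal (p * (1 - p) ^ (k - 1))) :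
    ∀ᵐ ω ∂(ℙ : Measure Ω),
      Tendsto (fun n : ℕ => (T n ω : ℝ) ^ 2 /
          ((∑ k ∈ Finset.range n, T k ω : ℕ) : ℝ) ^ ζ) atTop (nhds 0) := by
  classical
  have hq0 : (0:ℝ) ≤ 1 - p := by linarith
  have hq1 : 1 - p < 1 := by linarith
  have hqsum : Summable (fun j : ℕ => (1 - p) ^ j) := summable_geometric_of_lt_one hq0 hq1
  have hgeo : ∑' j : ℕ, (1 - p) ^ j = p⁻¹ := by
    rw [tsum_geometric_of_lt_one hq0 hq1]
    norm_num
  -- exact tail probability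
  have htail : ∀ n m : ℕ, (ℙ {ω | m < T n ω} : ENNReal) = ENNReal.ofReal ((1 - p) ^ m) := by
    intro n m
    have hset : {ω | m < T n ω} = ⋃ j : ℕ, {ω | T n ω = m + 1 + j} := by
      ext ω
      simp only [Set.mem_setOf_eq, Set.mem_iUnion]
      constructor
      · intro h; exact ⟨T n ω - (m + 1), by omega⟩
      · rintro ⟨j, hj⟩; omega
    have hdisj : Pairwise (Function.onFun Disjoint fun j : ℕ => {ω | T n ω = m + 1 + j}) := by
      intro i j hij
      simp only [Function.onFun, Set.disjoint_left, Set.mem_setOf_eq]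
      intro ω h1 h2
      omega
    have hmeas : ∀ j : ℕ, MeasurableSet {ω | T n ω = m + 1 + j} := fun j =>
      hTmeas n (measurableSet_eq (a := m + 1 + j))
    have heach : ∀ j : ℕ, (ℙ {ω | T n ω = m + 1 + j} : ENNReal)
        = ENNReal.ofReal (p * (1 - p) ^ (m + j)) := by
      intro j
      have he : m + 1 + j - 1 = m + j := by omega
      rw [hTgeom n (m + 1 + j) (by omega), he]
    have hfun : (fun j : ℕ => p * (1 - p) ^ (m + j))
        = fun j : ℕ => (p * (1 - p) ^ m) * (1 - p) ^ j := by
      funext j; rw [pow_add]; ring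
    have hsummable : Summable (fun j : ℕ => p * (1 - p) ^ (m + j)) := by
      rw [hfun]; exact hqsum.mul_left _
    have htsum : ∑' j : ℕ, p * (1 - p) ^ (m + j) = (1 - p) ^ m := by
      rw [hfun, tsum_mul_left, hgeo]
      field_simp
    rw [hset, measure_iUnion hdisj hmeas]
    calc ∑' j : ℕ, (ℙ {ω | T n ω = m + 1 + j} : ENNReal)
        = ∑' j : ℕ, ENNReal.ofReal (p * (1 - p) ^ (m + j)) := by
          exact tsum_congr heach
      _ = ENNReal.ofReal (∑' j : ℕ, p * (1 - p) ^ (m + j)) :=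
          (ENNReal.ofReal_tsum_of_nonneg
            (fun j => mul_nonneg hp0.le (pow_nonneg hq0 _)) hsummable).symm
      _ = ENNReal.ofReal ((1 - p) ^ m) := by rw [htsum]
  -- T n ≥ 1 almost surely
  have hzero : ∀ n, (ℙ {ω | T n ω = 0} : ENNReal) = 0 := by
    intro n
    have hc : {ω | T n ω = 0} = {ω | 0 < T n ω}ᶜ := by
      ext ω; simp [Set.mem_setOf_eq]
    have hms : MeasurableSet {ω | 0 < T n ω} := by
      have : {ω | 0 < T n ω} = T n ⁻¹' (Set.Ioi 0) := rfl
      rw [this]; exact hTmeas n measurableSet_Ioi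
    rw [hc, prob_compl_eq_one_sub hms]
    rw [htail n 0]
    simp
  have hae1 : ∀ᵐ ω ∂(ℙ : Measure Ω), ∀ n, 1 ≤ T n ω := by
    rw [ae_all_iff]
    intro n
    have : (ℙ {ω | ¬ 1 ≤ T n ω} : ENNReal) = 0 := by
      have : {ω | ¬ 1 ≤ T n ω} = {ω | T n ω = 0} := by ext ω; simp
      rw [this]; exact hzero n
    exact this
  -- constants
  set r : ℝ := max (1 - p) 2⁻¹ with hr_def
  have hr0 : (0:ℝ) < r := lt_max_of_lt_right (by norm_num)
  have hr1 : r < 1 := max_lt hq1 (by norm_num)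
  have hlogr : Real.log r < 0 := Real.log_neg hr0 hr1
  set C : ℝ := 3 / (-Real.log r) with hC_def
  have hC : 0 < C := by
    apply div_pos (by norm_num)
    linarith
  set M : ℕ → ℕ := fun n => ⌈C * Real.log n⌉₊ with hM_def
  -- Borel–Cantelli
  have hbc : ∀ᵐ ω ∂(ℙ : Measure Ω), ∀ᶠ n in atTop, ω ∉ {ω | M n < T n ω} := by
    apply ae_eventually_notMem
    have hbound : ∀ n : ℕ, (ℙ {ω | M n < T n ω} : ENNReal) ≤ ENNReal.ofReal (r ^ M n) := by
      intro n
      rw [htail n (M n)]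
      exact ENNReal.ofReal_le_ofReal (pow_le_pow_left₀ hq0 (le_max_left _ _) _)
    have hrsum : Summable (fun n : ℕ => r ^ M n) := by
      rw [← summable_nat_add_iff 1]
      have hbnd : ∀ n : ℕ, r ^ M (n + 1) ≤ ((n + 1 : ℕ) : ℝ) ^ (-3 : ℝ) := by
        intro n
        have hn1 : (1:ℝ) ≤ ((n + 1 : ℕ) : ℝ) := by exact_mod_cast Nat.one_le_iff_ne_zero.mpr (by omega)
        have hlogn : 0 ≤ Real.log ((n + 1 : ℕ) : ℝ) := Real.log_nonneg hn1
        have hne : Real.log r ≠ 0 := ne_of_lt hlogr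
        have h4 : C * Real.log r = -3 := by
          rw [hC_def]
          field_simp
        calc r ^ M (n + 1) = r ^ ((M (n + 1) : ℝ)) := (Real.rpow_natCast r _).symm
          _ ≤ r ^ (C * Real.log ((n + 1 : ℕ) : ℝ)) :=
              Real.rpow_le_rpow_of_exponent_ge hr0 hr1.le (Nat.le_ceil _)
          _ = ((n + 1 : ℕ) : ℝ) ^ (C * Real.log r) := by
              rw [Real.rpow_def_of_pos hr0,
                Real.rpow_def_of_pos (by linarith : (0:ℝ) < ((n + 1 : ℕ) : ℝ))]
              ring_nf
          _ = ((n + 1 : ℕ) : ℝ) ^ (-3 : ℝ) := by rw [h4]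
      apply Summable.of_nonneg_of_le (fun n => pow_nonneg hr0.le _) hbnd
      have : Summable (fun n : ℕ => ((n:ℝ)) ^ (-3:ℝ)) := Real.summable_nat_rpow.mpr (by norm_num)
      exact (summable_nat_add_iff 1).mpr this
    have hle : ∑' n, (ℙ {ω | M n < T n ω} : ENNReal) ≤ ENNReal.ofReal (∑' n, r ^ M n) := by
      calc ∑' n, (ℙ {ω | M n < T n ω} : ENNReal)
          ≤ ∑' n, ENNReal.ofReal (r ^ M n) := ENNReal.tsum_le_tsum hbound
        _ = ENNReal.ofReal (∑' n, r ^ M n) :=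
            (ENNReal.ofReal_tsum_of_nonneg (fun n => pow_nonneg hr0.le _) hrsum).symm
    exact ne_top_of_le_ne_top ENNReal.ofReal_ne_top hle
  -- the deterministic limit
  have htends : Tendsto (fun n : ℕ => (C * Real.log n + 1) ^ 2 / (n : ℝ) ^ ζ) atTop (nhds 0) := by
    have hζ2 : 0 < ζ / 2 := by linarith
    have hlog : (Real.log ·) =o[atTop] fun x : ℝ => x ^ (ζ / 2) :=
      isLittleO_log_rpow_atTop hζ2
    have hconst : (fun _ : ℝ => (1:ℝ)) =o[atTop] fun x : ℝ => x ^ (ζ / 2) := by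
      rw [Asymptotics.isLittleO_const_left]
      right
      have := tendsto_rpow_atTop hζ2
      refine tendsto_abs_atTop_atTop.comp this |>.congr (fun x => ?_)
      simp [Real.norm_eq_abs]
    have h1 : (fun x : ℝ => C * Real.log x + 1) =o[atTop] fun x : ℝ => x ^ (ζ / 2) :=
      ((hlog.const_mul_left C).add hconst)
    have h2 := h1.pow (n := 2) (by norm_num)
    have heq : (fun x : ℝ => (x ^ (ζ / 2)) ^ 2) =ᶠ[atTop] fun x : ℝ => x ^ ζ := by
      filter_upwards [eventually_ge_atTop (0:ℝ)] with x hx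
      rw [← Real.rpow_natCast (x ^ (ζ / 2)) 2, ← Real.rpow_mul hx]
      norm_num
    have h3 : (fun x : ℝ => (C * Real.log x + 1) ^ 2) =o[atTop] fun x : ℝ => x ^ ζ :=
      h2.trans_eventuallyEq heq
    have h4 := h3.tendsto_div_nhds_zero
    exact h4.comp tendsto_natCast_atTop_atTop
  -- combine
  filter_upwards [hae1, hbc] with ω h1 h2
  apply squeeze_zero' (g := fun n : ℕ => (C * Real.log n + 1) ^ 2 / (n : ℝ) ^ ζ)
  · filter_upwards with n
    exact div_nonneg (sq_nonneg _) (Real.rpow_nonneg (Nat.cast_nonneg _) _)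
  · filter_upwards [h2, eventually_ge_atTop 1] with n hn hn1
    simp only [Set.mem_setOf_eq, not_lt] at hn
    have hTn : (T n ω : ℝ) ≤ C * Real.log n + 1 := by
      have hx : 0 ≤ C * Real.log n :=
        mul_nonneg hC.le (Real.log_nonneg (by exact_mod_cast hn1))
      have hceil : (M n : ℝ) < C * Real.log n + 1 := Nat.ceil_lt_add_one hx
      have : (T n ω : ℝ) ≤ (M n : ℝ) := by exact_mod_cast hn
      linarith
    have hsumge : (n : ℝ) ≤ ((∑ k ∈ Finset.range n, T k ω : ℕ) : ℝ) := by
      have : n ≤ ∑ k ∈ Finset.range n, T k ω := by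
        calc n = ∑ _k ∈ Finset.range n, 1 := by simp
          _ ≤ ∑ k ∈ Finset.range n, T k ω := Finset.sum_le_sum fun k _ => h1 k
      exact_mod_cast this
    have hnum : (T n ω : ℝ) ^ 2 ≤ (C * Real.log n + 1) ^ 2 :=
      pow_le_pow_left₀ (Nat.cast_nonneg _) hTn 2
    have hden : (n : ℝ) ^ ζ ≤ ((∑ k ∈ Finset.range n, T k ω : ℕ) : ℝ) ^ ζ :=
      Real.rpow_le_rpow (Nat.cast_nonneg _) hsumge hζ0.le
    have hdpos : (0:ℝ) < (n : ℝ) ^ ζ :=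
      Real.rpow_pos_of_pos (by exact_mod_cast hn1 : (0:ℝ) < (n:ℝ)) _
    exact div_le_div₀ (by positivity) hnum hdpos hden
  · exact htends
end
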